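/- Let q = p^h with p an odd prime and h > 1, let σ = p^i with 1 ≤ i ≤ h − 1, and let m ∈ GF(q), m ≠ 0. Then the following are equivalent: (i) for every x ∈ GF(q) with x ≠ 0, the map t ↦ x·t − (m/x)·t^σ is a bijection of GF(q); (ii) m is a non-square in GF(q). (This says that F(t, t^σ, 0) is a star flock of the quadratic cone over the conic x·y = −m exactly when m is a non-square; these are the Kantor–Knuth flocks.) -/

import Mathlib

/-- Let `q = p^h`, `p` an odd prime, `h > 1`, `σ = p^i` with
`1 ≤ i ≤ h−1`, and `m ≠ 0` in `GF(q)`.  Then `t ↦ x·t − (m/x)·t^σ` is a bijection of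
`GF(q)` for every `x ≠ 0` iff `m` is a non-square in `GF(q)`.  (This says that
`F(t, t^σ, 0)` is a star flock of the quadratic cone over the conic `x·y = −m` exactly
when `m` is a non-square: the Kantor–Knuth flocks.) -/
theorem stmt_14 (p h i : ℕ) (hp : p.Prime) (hpodd : Odd p) (hh : 1 < h)
    (hi1 : 1 ≤ i) (hi2 : i ≤ h - 1)
    (F : Type) [Field F] [Fintype F] (hF : Fintype.card F = p ^ h)
    (m : F) (hm : m ≠ 0) :
    (∀ x : F, x ≠ 0 → Function.Bijective (fun t => x * t - m / x * t ^ (p ^ i))) ↔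
      ¬ ∃ s : F, s ^ 2 = m := by
  -- characteristic of F is p
  have hchar : CharP F p := by
    obtain ⟨r, hr⟩ := CharP.exists F
    obtain ⟨n, hrp, hcard⟩ := FiniteField.card F r
    have hrp' : r.Prime := hrp
    have : r = p := by
      have hdvd : r ∣ p ^ h := by
        rw [← hF, hcard]
        exact dvd_pow_self r n.2.ne'
      exact ((Nat.prime_dvd_prime_iff_eq hrp' hp).mp (hrp'.dvd_of_dvd_pow hdvd))
    rwa [this] at hr
  haveI := Fact.mk hp
  haveI := hchar
  constructor
  · rintro hbij ⟨s, hs⟩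
    have hs0 : s ≠ 0 := by rintro rfl; rw [← hs] at hm; simp at hm
    have hinj := (hbij s hs0).injective
    have h10 : (fun t : F => s * t - m / s * t ^ (p ^ i)) 1 =
        (fun t : F => s * t - m / s * t ^ (p ^ i)) 0 := by
      have hpi : p ^ i ≠ 0 := pow_ne_zero i hp.pos.ne'
      simp only [one_pow, mul_one, zero_pow hpi, mul_zero, sub_zero, mul_zero, sub_zero]
      rw [← hs]
      field_simp
      ring
    exact one_ne_zero (hinj h10)
  · intro hns x hx
    rw [← Finite.injective_iff_bijective]
    intro t1 t2 heq
    by_contra hne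
    have hu : t1 - t2 ≠ 0 := sub_ne_zero.mpr hne
    set u := t1 - t2 with hudef
    have key : x * u = m / x * u ^ (p ^ i) := by
      have hsub : u ^ (p ^ i) = t1 ^ (p ^ i) - t2 ^ (p ^ i) := sub_pow_char_pow t1 t2 i
      simp only at heq
      rw [hudef, hsub]
      ring_nf
      ring_nf at heq
      linear_combination heq
    -- p^i - 1 is even
    obtain ⟨k, hk⟩ : Even (p ^ i - 1) := by
      have : Odd (p ^ i) := hpodd.pow
      obtain ⟨j, hj⟩ := this
      refine ⟨j, by omega⟩
    have hpi1 : 1 ≤ p ^ i := Nat.one_le_pow _ _ hp.pos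
    have hupow : u ^ (p ^ i) = u * (u ^ k) ^ 2 := by
      rw [← pow_mul, ← pow_succ']
      congr 1
      omega
    have huk : u ^ k ≠ 0 := pow_ne_zero _ hu
    apply hns
    refine ⟨x / u ^ k, ?_⟩
    have hx2 : x ^ 2 = m * (u ^ k) ^ 2 := by
      have h1 : x * (x * u) = x * (m / x * (u * (u ^ k) ^ 2)) := by
        rw [key, hupow]
      field_simp at h1
      apply mul_right_cancel₀ hu
      linear_combination u * h1
    rw [div_pow, div_eq_iff (pow_ne_zero 2 huk)]
    exact hx2
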